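/- Associate to a cycle (k, l, n, m) (the locus k(u²+v²) − 2lu − 2nv + m = 0) the matrix C = [[l + i·n, −m], [k, −l + i·n]]. If M = [[a, b], [c, d]] is a real matrix with det M = ±1, then the Möbius transformation z ↦ (az+b)/(cz+d) maps the cycle with matrix C to the cycle with matrix M·C·M⁻¹. -/

import Mathlib

open Complex

/-- A point `z = u + iv` lies on the cycle whose associated matrix is
`[[l + i n, -m], [k, -l + i n]]`, i.e. it satisfies `k(u²+v²) - 2lu - 2nv + m = 0`.
The coefficients are extracted from the matrix entries. -/
def onCycleMatrix (C : Matrix (Fin 2) (Fin 2) ℂ) (z : ℂ) : Prop :=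
  (C 1 0).re * (z.re ^ 2 + z.im ^ 2) - 2 * (C 0 0).re * z.re - 2 * (C 0 0).im * z.im +
    (-(C 0 1)).re = 0

set_option maxHeartbeats 2000000 in
/-- If `M = [[a, b], [c, d]]` is real with `det M = ±1`, then the Möbius
transformation `z ↦ (az+b)/(cz+d)` maps the cycle with matrix
`C = [[l + i n, -m], [k, -l + i n]]` to the cycle with matrix `M C M⁻¹`:
`z` lies on the cycle `C` iff `(az+b)/(cz+d)` lies on the cycle `M C M⁻¹`. -/
theorem mobius_maps_cycle_to_conjugated_cycle
    (k l n m a b c d : ℝ)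
    (hC : ¬(k = 0 ∧ l = 0 ∧ n = 0 ∧ m = 0))
    (hdet : a * d - b * c = 1 ∨ a * d - b * c = -1)
    (z : ℂ) (hz : (c : ℂ) * z + (d : ℂ) ≠ 0) :
    onCycleMatrix (!![(l : ℂ) + (n : ℂ) * I, -(m : ℂ); (k : ℂ), -(l : ℂ) + (n : ℂ) * I]) z ↔
      onCycleMatrix
        ((!![(a : ℂ), (b : ℂ); (c : ℂ), (d : ℂ)]) *
          (!![(l : ℂ) + (n : ℂ) * I, -(m : ℂ); (k : ℂ), -(l : ℂ) + (n : ℂ) * I]) *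
          (!![(a : ℂ), (b : ℂ); (c : ℂ), (d : ℂ)])⁻¹)
        (((a : ℂ) * z + (b : ℂ)) / ((c : ℂ) * z + (d : ℂ))) := by
  have he : (a*d-b*c) ≠ 0 := by rcases hdet with h | h <;> rw [h] <;> norm_num
  have he2 : (a*d-b*c) * (a*d-b*c) = 1 := by rcases hdet with h | h <;> rw [h] <;> norm_num
  have hdetC : (!![(a : ℂ), (b : ℂ); (c : ℂ), (d : ℂ)]).det = ((a*d-b*c : ℝ) : ℂ) := by
    simp [Matrix.det_fin_two_of]
  have hinv : (!![(a : ℂ), (b : ℂ); (c : ℂ), (d : ℂ)])⁻¹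
      = ((a*d-b*c : ℝ) : ℂ)⁻¹ • !![(d:ℂ), -(b:ℂ); -(c:ℂ), (a:ℂ)] := by
    rw [Matrix.inv_def, Matrix.adjugate_fin_two_of, hdetC, Ring.inverse_eq_inv]
  have heC : ((a:ℂ) * d - b * c) ≠ 0 := by
    have := Complex.ofReal_ne_zero.mpr he
    push_cast at this
    exact this
  have hprod : (!![(a : ℂ), (b : ℂ); (c : ℂ), (d : ℂ)]) *
          (!![(l : ℂ) + (n : ℂ) * I, -(m : ℂ); (k : ℂ), -(l : ℂ) + (n : ℂ) * I]) *
          (!![(a : ℂ), (b : ℂ); (c : ℂ), (d : ℂ)])⁻¹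
      = !![ ((((a*d-b*c)⁻¹*(b*d*k + (a*d+b*c)*l + a*c*m)) : ℝ) : ℂ) + (n:ℂ)*I,
            -((((a*d-b*c)⁻¹*(b^2*k + 2*a*b*l + a^2*m)) : ℝ) : ℂ) ;
            ((((a*d-b*c)⁻¹*(d^2*k + 2*c*d*l + c^2*m)) : ℝ) : ℂ),
            -((((a*d-b*c)⁻¹*(b*d*k + (a*d+b*c)*l + a*c*m)) : ℝ) : ℂ) + (n:ℂ)*I ] := by
    rw [hinv]
    ext i j
    fin_cases i <;> fin_cases j <;>
      simp [Matrix.mul_apply, Fin.sum_univ_two]<;> field_simp [heC, show (↑d * ↑a - ↑c * ↑b : ℂ) ≠ 0 by intro h; apply heC; linear_combination h] <;> ring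
  rw [hprod]
  simp only [onCycleMatrix]
  norm_num [Complex.add_re, Complex.add_im, Complex.div_re, Complex.div_im,
    Complex.mul_re, Complex.mul_im, Complex.normSq_apply, ← Complex.ofReal_pow]
  have hN : (c * z.re + d) * (c * z.re + d) + c * z.im * (c * z.im) ≠ 0 := by
    intro h
    apply hz
    have h1 : Complex.normSq ((c : ℂ) * z + d) = 0 := by
      simp [Complex.normSq_apply, Complex.add_re, Complex.add_im, Complex.mul_re,
        Complex.mul_im]
      linarith
    exact Complex.normSq_eq_zero.mp h1
  have key :
    (a * d - b * c)⁻¹ * (d ^ 2 * k + 2 * c * d * l + c ^ 2 * m) *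
              (((a * z.re + b) * (c * z.re + d) / ((c * z.re + d) * (c * z.re + d) + c * z.im * (c * z.im)) +
                    a * z.im * (c * z.im) / ((c * z.re + d) * (c * z.re + d) + c * z.im * (c * z.im))) ^
                  2 +
                (a * z.im * (c * z.re + d) / ((c * z.re + d) * (c * z.re + d) + c * z.im * (c * z.im)) -
                    (a * z.re + b) * (c * z.im) / ((c * z.re + d) * (c * z.re + d) + c * z.im * (c * z.im))) ^
                  2) -
            2 * ((a * d - b * c)⁻¹ * (b * d * k + (a * d + b * c) * l + a * c * m)) *
              ((a * z.re + b) * (c * z.re + d) / ((c * z.re + d) * (c * z.re + d) + c * z.im * (c * z.im)) +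
                a * z.im * (c * z.im) / ((c * z.re + d) * (c * z.re + d) + c * z.im * (c * z.im))) -
          2 * n *
            (a * z.im * (c * z.re + d) / ((c * z.re + d) * (c * z.re + d) + c * z.im * (c * z.im)) -
              (a * z.re + b) * (c * z.im) / ((c * z.re + d) * (c * z.re + d) + c * z.im * (c * z.im))) +
        (a * d - b * c)⁻¹ * (b ^ 2 * k + 2 * a * b * l + a ^ 2 * m)
      = (a * d - b * c) * (k * (z.re ^ 2 + z.im ^ 2) - 2 * l * z.re - 2 * n * z.im + m) /
          ((c * z.re + d) * (c * z.re + d) + c * z.im * (c * z.im)) := by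
    field_simp [show (c * z.re + d) ^ 2 + c ^ 2 * z.im ^ 2 ≠ 0 by intro h; apply hN; linear_combination h]
    ring
  rw [key, div_eq_zero_iff, mul_eq_zero]
  constructor
  · intro h
    exact Or.inl (Or.inr h)
  · rintro (h | h)
    · rcases h with h | h
      · exact absurd h he
      · exact h
    · exact absurd h hN
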